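/- (Addition theorem for q-Euler polynomials.) For all x, y ∈ ℂ and every integer n ≥ 0: E_{n,q}(x,y) = Σ_{k=0}^{n} [n choose k]_q e_{k,q} (x ⊕_q y)^{n−k}, and also E_{n,q}(x,y) = Σ_{k=0}^{n} [n choose k]_q ((−1;q)_{n−k}/2^{n−k}) E_{k,q}(x) y^{n−k}. -/

import Mathlib

open Finset PowerSeries

/-- The `q`-number `[n]_q = (1 - q^n)/(1 - q)`. -/
noncomputable def qNum (q : ℂ) (n : ℕ) : ℂ := (1 - q ^ n) / (1 - q)

/-- The `q`-factorial `[n]_q!`. -/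
noncomputable def qFact (q : ℂ) : ℕ → ℂ
  | 0 => 1
  | n + 1 => qNum q (n + 1) * qFact q n

/-- The `q`-shifted factorial `(a; q)_n = ∏_{j=0}^{n-1} (1 - q^j a)`. -/
noncomputable def qShift (a q : ℂ) (n : ℕ) : ℂ := ∏ j ∈ Finset.range n, (1 - q ^ j * a)

/-- The Gaussian binomial coefficient `[n choose k]_q = (q;q)_n / ((q;q)_{n-k} (q;q)_k)`. -/
noncomputable def qBinom (q : ℂ) (n k : ℕ) : ℂ :=
  qShift q q n / (qShift q q (n - k) * qShift q q k)

/-- The formal power series (in `t`) `𝓔_q(tx) = Σ_{n≥0} (-1;q)_n (x)^n t^n / (2^n [n]_q!)`. -/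
noncomputable def qExp (q x : ℂ) : PowerSeries ℂ :=
  PowerSeries.mk fun n => qShift (-1) q n * x ^ n / (2 ^ n * qFact q n)

/-- The generating series `Σ_{n≥0} a_n t^n / [n]_q!` of a sequence `a`. -/
noncomputable def qGen (q : ℂ) (a : ℕ → ℂ) : PowerSeries ℂ :=
  PowerSeries.mk fun n => a n / qFact q n

/-- The `q`-addition `(x ⊕_q y)^n`. -/
noncomputable def qAdd (q x y : ℂ) (n : ℕ) : ℂ :=
  ∑ k ∈ Finset.range (n + 1),
    qBinom q n k * (qShift (-1) q k * qShift (-1) q (n - k) / 2 ^ n) * x ^ k * y ^ (n - k)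

section Aux
variable {q : ℂ}

lemma one_sub_q_ne (hq1 : ‖q‖ < 1) : (1 : ℂ) - q ≠ 0 := by
  intro h
  have : q = 1 := by linear_combination -h
  rw [this] at hq1; simp at hq1

lemma one_sub_q_pow_ne (hq1 : ‖q‖ < 1) (m : ℕ) (hm : 0 < m) : (1 : ℂ) - q ^ m ≠ 0 := by
  intro h
  have hq : q ^ m = 1 := by linear_combination -h
  have : ‖q ^ m‖ < 1 := by
    rw [norm_pow]
    exact pow_lt_one₀ (norm_nonneg q) hq1 hm.ne'
  rw [hq] at this; simp at this

lemma qNum_ne_zero (hq1 : ‖q‖ < 1) (m : ℕ) (hm : 0 < m) : qNum q m ≠ 0 :=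
  div_ne_zero (one_sub_q_pow_ne hq1 m hm) (one_sub_q_ne hq1)

lemma qFact_ne_zero (hq1 : ‖q‖ < 1) : ∀ n, qFact q n ≠ 0
  | 0 => one_ne_zero
  | n + 1 => mul_ne_zero (qNum_ne_zero hq1 (n + 1) n.succ_pos) (qFact_ne_zero hq1 n)

lemma qShift_q_eq (hq1 : ‖q‖ < 1) : ∀ n, qShift q q n = (1 - q) ^ n * qFact q n
  | 0 => by simp [qShift, qFact]
  | n + 1 => by
    rw [qShift, Finset.prod_range_succ, ← qShift, qShift_q_eq hq1 n, qFact, qNum]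
    have h1 : (1 : ℂ) - q ≠ 0 := one_sub_q_ne hq1
    field_simp
    ring

lemma qBinom_eq (hq1 : ‖q‖ < 1) {n k : ℕ} (h : k ≤ n) :
    qBinom q n k = qFact q n / (qFact q k * qFact q (n - k)) := by
  rw [qBinom, qShift_q_eq hq1, qShift_q_eq hq1, qShift_q_eq hq1]
  have h1 : (1 : ℂ) - q ≠ 0 := one_sub_q_ne hq1
  have h2 : ((1 : ℂ) - q) ^ (n - k) * (1 - q) ^ k = (1 - q) ^ n := by
    rw [← pow_add]; congr 1; omega
  have hf := qFact_ne_zero hq1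
  rw [div_eq_div_iff (mul_ne_zero (mul_ne_zero (pow_ne_zero _ h1) (hf _))
    (mul_ne_zero (pow_ne_zero _ h1) (hf _))) (mul_ne_zero (hf _) (hf _))]
  linear_combination (-1 : ℂ) * qFact q n * qFact q k * qFact q (n - k) * h2

lemma coeff_qExp_mul (hq1 : ‖q‖ < 1) (x y : ℂ) (m : ℕ) :
    (PowerSeries.coeff m) (qExp q x * qExp q y) = qAdd q x y m / qFact q m := by
  rw [PowerSeries.coeff_mul, Finset.Nat.sum_antidiagonal_eq_sum_range_succ_mk, qAdd,
    Finset.sum_div]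
  refine Finset.sum_congr rfl fun k hk => ?_
  rw [Finset.mem_range] at hk
  have hkm : k ≤ m := by omega
  simp only [qExp, PowerSeries.coeff_mk]
  rw [qBinom_eq hq1 hkm]
  have hf := qFact_ne_zero hq1
  have h2 : (2 : ℂ) ≠ 0 := two_ne_zero
  have h2m : ((2:ℂ)^m) = 2^k * 2^(m-k) := by rw [← pow_add]; congr 1; omega
  rw [eq_div_iff (hf m)]
  field_simp
  rw [h2m]
  ring

end Aux

lemma qExp_zero (q : ℂ) : qExp q (0:ℂ) = 1 := by
  ext n
  cases n with
  | zero => simp [qExp, qShift, qFact]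
  | succ n => simp [qExp]

lemma qExpOne_add_one_ne (q : ℂ) : qExp q 1 + 1 ≠ 0 := by
  intro h
  have h0 := congrArg (PowerSeries.coeff 0) h
  simp [qExp, qShift, qFact] at h0


/-- Addition theorem for the `q`-Euler polynomials `E_{n,q}(x,y)`, defined by
`(2/(𝓔_q(t)+1)) 𝓔_q(tx) 𝓔_q(ty) = Σ_{n≥0} E_{n,q}(x,y) t^n/[n]_q!`, in terms of the
`q`-Euler numbers `e_{n,q}` defined by `2/(𝓔_q(t)+1) = Σ_{n≥0} e_{n,q} t^n/[n]_q!`. -/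
theorem qEuler_addition (q : ℂ) (hq0 : 0 < ‖q‖) (hq1 : ‖q‖ < 1)
    (e : ℕ → ℂ) (he : qGen q e * (qExp q 1 + 1) = 2)
    (E : ℂ → ℂ → ℕ → ℂ)
    (hE : ∀ x y : ℂ, qGen q (E x y) * (qExp q 1 + 1) = 2 * qExp q x * qExp q y)
    (x y : ℂ) (n : ℕ) :
    E x y n = ∑ k ∈ Finset.range (n + 1), qBinom q n k * e k * qAdd q x y (n - k) ∧
    E x y n = ∑ k ∈ Finset.range (n + 1),
      qBinom q n k * (qShift (-1) q (n - k) / 2 ^ (n - k)) * E x 0 k * y ^ (n - k) := by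

  have hF : qExp q 1 + 1 ≠ 0 := qExpOne_add_one_ne q
  have hf := qFact_ne_zero hq1
  have hgen : qGen q (E x y) = qGen q e * (qExp q x * qExp q y) := by
    apply mul_right_cancel₀ hF
    rw [hE x y, ← he]; ring
  have hgen0 : qGen q (E x 0) = qGen q e * qExp q x := by
    apply mul_right_cancel₀ hF
    have h0 := hE x 0
    rw [qExp_zero] at h0
    rw [h0, ← he]; ring
  constructor
  · have hc := congrArg (PowerSeries.coeff n) hgen
    rw [qGen, PowerSeries.coeff_mk, PowerSeries.coeff_mul,
      Finset.Nat.sum_antidiagonal_eq_sum_range_succ_mk] at hc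
    have key : E x y n / qFact q n =
        (∑ k ∈ Finset.range (n + 1), qBinom q n k * e k * qAdd q x y (n - k)) / qFact q n := by
      rw [hc, Finset.sum_div]
      refine Finset.sum_congr rfl fun k hk => ?_
      rw [Finset.mem_range] at hk
      have hkn : k ≤ n := by omega
      rw [coeff_qExp_mul hq1, qGen, PowerSeries.coeff_mk, qBinom_eq hq1 hkn,
        eq_div_iff (hf n)]
      field_simp
    rw [div_eq_div_iff (hf n) (hf n)] at key
    exact mul_right_cancel₀ (hf n) key
  · have hgen2 : qGen q (E x y) = qGen q (E x 0) * qExp q y := by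
      rw [hgen, hgen0]; ring
    have hc := congrArg (PowerSeries.coeff n) hgen2
    rw [qGen, PowerSeries.coeff_mk, PowerSeries.coeff_mul,
      Finset.Nat.sum_antidiagonal_eq_sum_range_succ_mk] at hc
    have key : E x y n / qFact q n =
        (∑ k ∈ Finset.range (n + 1), qBinom q n k * (qShift (-1) q (n - k) / 2 ^ (n - k)) *
          E x 0 k * y ^ (n - k)) / qFact q n := by
      rw [hc, Finset.sum_div]
      refine Finset.sum_congr rfl fun k hk => ?_
      rw [Finset.mem_range] at hk
      have hkn : k ≤ n := by omega
      rw [qGen, PowerSeries.coeff_mk, qExp, PowerSeries.coeff_mk, qBinom_eq hq1 hkn,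
        eq_div_iff (hf n)]
      field_simp
    rw [div_eq_div_iff (hf n) (hf n)] at key
    exact mul_right_cancel₀ (hf n) key
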